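/- For all ν > 0, γ₀ > 0, γ₁ ∈ (0,1), γ₂ > 0, and t > 0, define ỹ(t) = √( ((4νt+γ₀²γ₁²)·γ₀²γ₁²/(4νt)) · ln( (4νt+γ₀²γ₁²)^{3/2}/(γ₀³γ₁³) ) ). Then h₁(t,·) is even in y, h₁(t,0) < 0, h₁(t,y) < 0 for all 0 ≤ y < ỹ(t), h₁(t,ỹ(t)) = 0, and h₁(t,y) > 0 for all y > ỹ(t); i.e. ỹ(t) is the unique zero of h₁(t,·) on [0,∞). -/

import Mathlib

open MeasureTheory Real Filter Set

noncomputable section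

/-- The function `h₁(t,y) = γ₂·γ₁³·(4νt+γ₀²γ₁²)^{−3/2}·exp(−y²/(4νt+γ₀²γ₁²))
  − γ₂·γ₀^{−3}·exp(−y²/(γ₀²γ₁²))` from the proof of Proposition 2.4. -/
def h1fun (ν γ₀ γ₁ γ₂ : ℝ) (t y : ℝ) : ℝ :=
  γ₂ * γ₁^3 / (Real.sqrt (4*ν*t + γ₀^2*γ₁^2))^3 * Real.exp (-y^2 / (4*ν*t + γ₀^2*γ₁^2))
    - γ₂ / γ₀^3 * Real.exp (-y^2 / (γ₀^2*γ₁^2))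

/-- The unique positive zero `ỹ(t)` of `h₁(t,·)` (for `t > 0`). -/
def ytil (ν γ₀ γ₁ : ℝ) (t : ℝ) : ℝ :=
  Real.sqrt ((4*ν*t + γ₀^2*γ₁^2) * γ₀^2 * γ₁^2 / (4*ν*t)
    * Real.log ((Real.sqrt (4*ν*t + γ₀^2*γ₁^2))^3 / (γ₀^3 * γ₁^3)))

/-- sign analysis of `h₁` and its unique positive zero, proof of
Proposition 2.4. For `t > 0`: `h₁(t,·)` is even, negative at `0` and on `[0,ỹ(t))`,
vanishes at `ỹ(t)`, and is positive on `(ỹ(t),∞)`. -/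
theorem h1_sign_and_unique_zero (ν γ₀ γ₁ γ₂ t : ℝ) (hν : 0 < ν) (hγ₀ : 0 < γ₀)
    (hγ₁ : γ₁ ∈ Set.Ioo (0:ℝ) 1) (hγ₂ : 0 < γ₂) (ht : 0 < t) :
    (∀ y : ℝ, h1fun ν γ₀ γ₁ γ₂ t (-y) = h1fun ν γ₀ γ₁ γ₂ t y) ∧
    h1fun ν γ₀ γ₁ γ₂ t 0 < 0 ∧
    (∀ y : ℝ, 0 ≤ y → y < ytil ν γ₀ γ₁ t → h1fun ν γ₀ γ₁ γ₂ t y < 0) ∧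
    h1fun ν γ₀ γ₁ γ₂ t (ytil ν γ₀ γ₁ t) = 0 ∧
    (∀ y : ℝ, ytil ν γ₀ γ₁ t < y → 0 < h1fun ν γ₀ γ₁ γ₂ t y) := by
  obtain ⟨hγ₁0, hγ₁1⟩ := hγ₁
  set A : ℝ := 4*ν*t + γ₀^2*γ₁^2 with hAdef
  have h4 : (0:ℝ) < 4*ν*t := by positivity
  have hB : (0:ℝ) < γ₀^2*γ₁^2 := by positivity
  have hA : 0 < A := by rw [hAdef]; positivity
  have hBA : γ₀^2*γ₁^2 < A := by rw [hAdef]; linarith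
  have hsA : 0 < Real.sqrt A := Real.sqrt_pos.2 hA
  have hsqrtB : Real.sqrt (γ₀^2*γ₁^2) = γ₀*γ₁ := by
    rw [show γ₀^2*γ₁^2 = (γ₀*γ₁)^2 by ring, Real.sqrt_sq (by positivity)]
  have hcube : γ₀^3*γ₁^3 < (Real.sqrt A)^3 := by
    have h1 : γ₀*γ₁ < Real.sqrt A := by
      rw [← hsqrtB]; exact Real.sqrt_lt_sqrt hB.le hBA
    calc γ₀^3*γ₁^3 = (γ₀*γ₁)^3 := by ring
      _ < (Real.sqrt A)^3 := by
          exact pow_lt_pow_left₀ h1 (by positivity) (by norm_num)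
  set L : ℝ := Real.log ((Real.sqrt A)^3 / (γ₀^3*γ₁^3)) with hLdef
  have hL : 0 < L := Real.log_pos (by
    rw [lt_div_iff₀ (by positivity)]; linarith)
  set D : ℝ := (4*ν*t) / (A * (γ₀^2*γ₁^2)) with hDdef
  have hD : 0 < D := by positivity
  have hyt2 : (ytil ν γ₀ γ₁ t)^2 = L / D := by
    rw [ytil, Real.sq_sqrt]
    · rw [hDdef]
      field_simp
      ring
    · have : 0 ≤ A * γ₀^2 * γ₁^2 / (4*ν*t) := by positivity
      exact mul_nonneg this hL.le
  have hytpos : 0 < ytil ν γ₀ γ₁ t := by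
    rw [ytil]
    apply Real.sqrt_pos.2
    have : 0 < A * γ₀^2 * γ₁^2 / (4*ν*t) := by positivity
    exact mul_pos this hL
  have hytnn : 0 ≤ ytil ν γ₀ γ₁ t := hytpos.le
  -- the key factorization
  have hfact : ∀ y : ℝ, h1fun ν γ₀ γ₁ γ₂ t y
      = γ₂/γ₀^3 * Real.exp (-y^2/(γ₀^2*γ₁^2))
        * (Real.exp (D*(y^2 - (ytil ν γ₀ γ₁ t)^2)) - 1) := by
    intro y
    have hexpK : Real.exp (D*(y^2 - (ytil ν γ₀ γ₁ t)^2))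
        = Real.exp (D*y^2) * (γ₀^3*γ₁^3/(Real.sqrt A)^3) := by
      rw [hyt2]
      have h1 : D*(y^2 - L/D) = D*y^2 + (-L) := by
        field_simp
        ring
      rw [h1, Real.exp_add, Real.exp_neg, hLdef,
        Real.exp_log (by positivity), inv_div]
    have hexp2 : Real.exp (-y^2/(γ₀^2*γ₁^2)) * Real.exp (D*y^2)
        = Real.exp (-y^2/A) := by
      rw [← Real.exp_add]
      congr 1
      rw [hDdef]
      field_simp
      ring
    rw [h1fun, hexpK, ← hAdef]
    have : γ₂/γ₀^3 * Real.exp (-y^2/(γ₀^2*γ₁^2))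
        * (Real.exp (D*y^2) * (γ₀^3*γ₁^3/(Real.sqrt A)^3) - 1)
        = (Real.exp (-y^2/(γ₀^2*γ₁^2)) * Real.exp (D*y^2))
            * (γ₂ * γ₁^3 / (Real.sqrt A)^3)
          - γ₂/γ₀^3 * Real.exp (-y^2/(γ₀^2*γ₁^2)) := by
      field_simp
    rw [this, hexp2]
    ring
  have hcpos : ∀ y : ℝ, 0 < γ₂/γ₀^3 * Real.exp (-y^2/(γ₀^2*γ₁^2)) := by
    intro y; positivity
  refine ⟨?_, ?_, ?_, ?_, ?_⟩
  · intro y; simp [h1fun, neg_sq]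
  · rw [hfact 0]
    apply mul_neg_of_pos_of_neg (hcpos 0)
    have : D*((0:ℝ)^2 - (ytil ν γ₀ γ₁ t)^2) < 0 := by
      apply mul_neg_of_pos_of_neg hD
      have : 0 < (ytil ν γ₀ γ₁ t)^2 := by positivity
      linarith
    have := Real.exp_lt_one_iff.2 this
    linarith
  · intro y hy0 hylt
    rw [hfact y]
    apply mul_neg_of_pos_of_neg (hcpos y)
    have hsq : y^2 < (ytil ν γ₀ γ₁ t)^2 :=
      pow_lt_pow_left₀ hylt hy0 (by norm_num)
    have : D*(y^2 - (ytil ν γ₀ γ₁ t)^2) < 0 :=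
      mul_neg_of_pos_of_neg hD (by linarith)
    have := Real.exp_lt_one_iff.2 this
    linarith
  · rw [hfact]
    simp
  · intro y hy
    rw [hfact y]
    apply mul_pos (hcpos y)
    have hsq : (ytil ν γ₀ γ₁ t)^2 < y^2 :=
      pow_lt_pow_left₀ hy hytnn (by norm_num)
    have : 0 < D*(y^2 - (ytil ν γ₀ γ₁ t)^2) :=
      mul_pos hD (by linarith)
    have := Real.one_lt_exp_iff.2 this
    linarith
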